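/- Let g = g₀ ⊕ g₁ with [g₁,g₁] = 0. If M is a finite-dimensional Z-graded g-module (g₀ acting in degree 0, g₁ in degree 1) that is projective as an ungraded g-module, then M is projective in the category of graded g-modules with degree-preserving morphisms. -/

import Mathlib

universe u

attribute [local instance 100] LieRing.ofAssociativeRing

/-- A module over the Lie superalgebra `g = g₀ ⊕ g₁` with `[g₁,g₁] = 0`. -/
structure GSMod (k : Type u) [Field k] (g₀ : Type u) [LieRing g₀] [LieAlgebra k g₀]
    (g₁ : Type u) [AddCommGroup g₁] [Module k g₁] [LieRingModule g₀ g₁]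
    (V : Type u) [AddCommGroup V] [Module k V] where
  ρ₀ : g₀ →ₗ⁅k⁆ Module.End k V
  ρ₁ : g₁ →ₗ[k] Module.End k V
  anticomm : ∀ e f : g₁, ρ₁ e * ρ₁ f + ρ₁ f * ρ₁ e = 0
  compat : ∀ (x : g₀) (e : g₁), ρ₀ x * ρ₁ e - ρ₁ e * ρ₀ x = ρ₁ ⁅x, e⁆

/-- A homomorphism of `g`-modules. -/
def IsGHom {k g₀ g₁ V W : Type u} [Field k] [LieRing g₀] [LieAlgebra k g₀]
    [AddCommGroup g₁] [Module k g₁] [LieRingModule g₀ g₁]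
    [AddCommGroup V] [Module k V] [AddCommGroup W] [Module k W]
    (σV : GSMod k g₀ g₁ V) (σW : GSMod k g₀ g₁ W) (f : V →ₗ[k] W) : Prop :=
  (∀ (x : g₀) (v : V), f (σV.ρ₀ x v) = σW.ρ₀ x (f v)) ∧
  (∀ (e : g₁) (v : V), f (σV.ρ₁ e v) = σW.ρ₁ e (f v))

/-- Projectivity in the category of finite-dimensional `g`-modules. -/
def IsProjGMod {k g₀ g₁ P : Type u} [Field k] [LieRing g₀] [LieAlgebra k g₀]
    [AddCommGroup g₁] [Module k g₁] [LieRingModule g₀ g₁]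
    [AddCommGroup P] [Module k P] (σP : GSMod k g₀ g₁ P) : Prop :=
  ∀ (W L : Type u) [AddCommGroup W] [Module k W] [AddCommGroup L] [Module k L]
    [FiniteDimensional k W] [FiniteDimensional k L]
    (σW : GSMod k g₀ g₁ W) (σL : GSMod k g₀ g₁ L)
    (f : W →ₗ[k] L) (φ : P →ₗ[k] L),
    Function.Surjective f → IsGHom σW σL f → IsGHom σP σL φ →
    ∃ ψ : P →ₗ[k] W, IsGHom σP σW ψ ∧ f ∘ₗ ψ = φ

/-- A `ℤ`-grading on a `g`-module `V = ⊕ᵢ Vⁱ`: the submodules `𝒱 i` form an internal direct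
sum, `g₀` acts in degree `0` and `g₁` acts in degree `1`. -/
def IsGrading {k g₀ g₁ V : Type u} [Field k] [LieRing g₀] [LieAlgebra k g₀]
    [AddCommGroup g₁] [Module k g₁] [LieRingModule g₀ g₁]
    [AddCommGroup V] [Module k V]
    (σ : GSMod k g₀ g₁ V) (𝒱 : ℤ → Submodule k V) : Prop :=
  DirectSum.IsInternal 𝒱 ∧
  (∀ (i : ℤ) (x : g₀), ∀ v ∈ 𝒱 i, σ.ρ₀ x v ∈ 𝒱 i) ∧
  (∀ (i : ℤ) (e : g₁), ∀ v ∈ 𝒱 i, σ.ρ₁ e v ∈ 𝒱 (i + 1))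

/-- A degree-preserving (graded) map between graded modules. -/
def IsGradedMap {k V W : Type u} [Field k] [AddCommGroup V] [Module k V]
    [AddCommGroup W] [Module k W]
    (𝒱 : ℤ → Submodule k V) (𝒲 : ℤ → Submodule k W) (f : V →ₗ[k] W) : Prop :=
  ∀ i : ℤ, ∀ v ∈ 𝒱 i, f v ∈ 𝒲 i

section Aux

variable {k V W : Type u} [Field k] [AddCommGroup V] [Module k V]
  [AddCommGroup W] [Module k W]

/-- Projection onto the `i`-th graded piece. -/
noncomputable def gradProj (𝒱 : ℤ → Submodule k V) (hV : DirectSum.IsInternal 𝒱) (i : ℤ) :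
    V →ₗ[k] V :=
  (𝒱 i).subtype ∘ₗ (DirectSum.component k ℤ (fun j => ↥(𝒱 j)) i) ∘ₗ
    (LinearEquiv.ofBijective (DirectSum.coeLinearMap 𝒱) hV).symm.toLinearMap

theorem gradProj_mem (𝒱 : ℤ → Submodule k V) (hV : DirectSum.IsInternal 𝒱) (i : ℤ) (v : V) :
    gradProj 𝒱 hV i v ∈ 𝒱 i :=
  ((DirectSum.component k ℤ (fun j => ↥(𝒱 j)) i)
    ((LinearEquiv.ofBijective (DirectSum.coeLinearMap 𝒱) hV).symm v)).2

theorem gradProj_of_mem (𝒱 : ℤ → Submodule k V) (hV : DirectSum.IsInternal 𝒱) {i : ℤ}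
    {v : V} (hv : v ∈ 𝒱 i) : gradProj 𝒱 hV i v = v := by
  simp only [gradProj, LinearMap.comp_apply, LinearEquiv.coe_coe,
    ← DirectSum.apply_eq_component, hV.ofBijective_coeLinearMap_of_mem hv,
    Submodule.coe_subtype]

theorem gradProj_of_mem_ne (𝒱 : ℤ → Submodule k V) (hV : DirectSum.IsInternal 𝒱) {i j : ℤ}
    (hij : i ≠ j) {v : V} (hv : v ∈ 𝒱 i) : gradProj 𝒱 hV j v = 0 := by
  simp only [gradProj, LinearMap.comp_apply, LinearEquiv.coe_coe,
    ← DirectSum.apply_eq_component, hV.ofBijective_coeLinearMap_of_mem_ne hij hv,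
    Submodule.coe_subtype, ZeroMemClass.coe_zero]

/-- Two linear maps agreeing on all graded pieces are equal. -/
theorem gradExt (𝒱 : ℤ → Submodule k V) (hV : DirectSum.IsInternal 𝒱)
    {F G : V →ₗ[k] W} (h : ∀ i : ℤ, ∀ v ∈ 𝒱 i, F v = G v) : F = G := by
  ext v
  have hv : v ∈ ⨆ i, 𝒱 i := by rw [hV.submodule_iSup_eq_top]; trivial
  refine Submodule.iSup_induction (motive := fun v => F v = G v) 𝒱 hv
    (fun i v hv => h i v hv) (by simp) ?_
  intro a b ha hb
  simp [map_add, ha, hb]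

/-- A map shifting degrees by `d` commutes with the projections accordingly. -/
theorem gradProj_comm (𝒱 : ℤ → Submodule k V) (hV : DirectSum.IsInternal 𝒱)
    (𝒲 : ℤ → Submodule k W) (hW : DirectSum.IsInternal 𝒲)
    (g : V →ₗ[k] W) (d : ℤ) (hg : ∀ i : ℤ, ∀ v ∈ 𝒱 i, g v ∈ 𝒲 (i + d))
    (i : ℤ) (v : V) :
    gradProj 𝒲 hW (i + d) (g v) = g (gradProj 𝒱 hV i v) := by
  have : (gradProj 𝒲 hW (i + d)) ∘ₗ g = g ∘ₗ gradProj 𝒱 hV i := by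
    refine gradExt 𝒱 hV ?_
    intro j v hv
    rcases eq_or_ne j i with rfl | hji
    · simp only [LinearMap.comp_apply]
      rw [gradProj_of_mem 𝒱 hV hv, gradProj_of_mem 𝒲 hW (hg j v hv)]
    · simp only [LinearMap.comp_apply]
      rw [gradProj_of_mem_ne 𝒱 hV hji hv, map_zero,
        gradProj_of_mem_ne 𝒲 hW (fun hc => hji (by omega)) (hg j v hv)]
  exact LinearMap.congr_fun this v

end Aux

/-- Let `g = g₀ ⊕ g₁` with `[g₁,g₁] = 0`.  If `M` is a finite-dimensional
`ℤ`-graded `g`-module (`g₀` acting in degree 0, `g₁` in degree 1) that is projective as an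
ungraded `g`-module, then `M` is projective in the category of finite-dimensional graded
`g`-modules with degree-preserving morphisms. -/
theorem stmt_9 (k g₀ g₁ M : Type u) [Field k]
    [LieRing g₀] [LieAlgebra k g₀]
    [AddCommGroup g₁] [Module k g₁] [LieRingModule g₀ g₁]
    [AddCommGroup M] [Module k M] [FiniteDimensional k M]
    (σM : GSMod k g₀ g₁ M) (𝒨 : ℤ → Submodule k M) (hM : IsGrading σM 𝒨)
    (hproj : IsProjGMod σM) :
    ∀ (W L : Type u) [AddCommGroup W] [Module k W] [AddCommGroup L] [Module k L]
      [FiniteDimensional k W] [FiniteDimensional k L]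
      (σW : GSMod k g₀ g₁ W) (σL : GSMod k g₀ g₁ L)
      (𝒲 : ℤ → Submodule k W) (𝒧 : ℤ → Submodule k L),
      IsGrading σW 𝒲 → IsGrading σL 𝒧 →
      ∀ (f : W →ₗ[k] L) (φ : M →ₗ[k] L),
        Function.Surjective f → IsGHom σW σL f → IsGradedMap 𝒲 𝒧 f →
        IsGHom σM σL φ → IsGradedMap 𝒨 𝒧 φ →
        ∃ ψ : M →ₗ[k] W, IsGHom σM σW ψ ∧ IsGradedMap 𝒨 𝒲 ψ ∧ f ∘ₗ ψ = φ := by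
  intro W L _ _ _ _ _ _ σW σL 𝒲 𝒧 hGW hGL f φ hsurj hfhom hfgr hφhom hφgr
  obtain ⟨hMint, hM0, hM1⟩ := hM
  obtain ⟨hWint, hW0, hW1⟩ := hGW
  obtain ⟨hLint, hL0, hL1⟩ := hGL
  -- get an ungraded lift from projectivity
  obtain ⟨ψ, hψhom, hψlift⟩ := hproj W L σW σL f φ hsurj hfhom hφhom
  -- the graded component of ψ
  set eM := LinearEquiv.ofBijective (DirectSum.coeLinearMap 𝒨) hMint with heM
  set ψ' : M →ₗ[k] W :=
    (DirectSum.toModule k ℤ W (fun i => gradProj 𝒲 hWint i ∘ₗ ψ ∘ₗ (𝒨 i).subtype)) ∘ₗ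
      eM.symm.toLinearMap with hψ'
  have key : ∀ (i : ℤ), ∀ v ∈ 𝒨 i, ψ' v = gradProj 𝒲 hWint i (ψ v) := by
    intro i v hv
    have h1 : eM.symm v = DirectSum.lof k ℤ (fun j => ↥(𝒨 j)) i ⟨v, hv⟩ := by
      rw [LinearEquiv.symm_apply_eq, heM]
      show v = DirectSum.coeLinearMap 𝒨 (DirectSum.lof k ℤ (fun j => ↥(𝒨 j)) i ⟨v, hv⟩)
      rw [DirectSum.lof_eq_of, DirectSum.coeLinearMap_of]
    simp only [hψ', LinearMap.comp_apply, LinearEquiv.coe_coe, h1,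
      DirectSum.toModule_lof, Submodule.coe_subtype]
  refine ⟨ψ', ⟨?_, ?_⟩, ?_, ?_⟩
  · -- ρ₀ equivariance
    intro x v
    have : ψ' ∘ₗ (σM.ρ₀ x : Module.End k M) = (σW.ρ₀ x : Module.End k W) ∘ₗ ψ' := by
      refine gradExt 𝒨 hMint ?_
      intro i v hv
      simp only [LinearMap.comp_apply]
      rw [key i _ (hM0 i x v hv), key i v hv, hψhom.1 x v]
      have := gradProj_comm 𝒲 hWint 𝒲 hWint (σW.ρ₀ x) 0
        (fun j w hw => by simpa using hW0 j x w hw) i (ψ v)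
      simpa using this
    exact LinearMap.congr_fun this v
  · -- ρ₁ equivariance
    intro e v
    have : ψ' ∘ₗ (σM.ρ₁ e : Module.End k M) = (σW.ρ₁ e : Module.End k W) ∘ₗ ψ' := by
      refine gradExt 𝒨 hMint ?_
      intro i v hv
      simp only [LinearMap.comp_apply]
      rw [key (i + 1) _ (hM1 i e v hv), key i v hv, hψhom.2 e v]
      exact gradProj_comm 𝒲 hWint 𝒲 hWint (σW.ρ₁ e) 1 (fun j w hw => hW1 j e w hw) i (ψ v)
    exact LinearMap.congr_fun this v
  · -- graded map
    intro i v hv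
    rw [key i v hv]
    exact gradProj_mem 𝒲 hWint i (ψ v)
  · -- lifts φ
    refine gradExt 𝒨 hMint ?_
    intro i v hv
    simp only [LinearMap.comp_apply]
    rw [key i v hv]
    have hc := gradProj_comm 𝒲 hWint 𝒧 hLint f 0
      (fun j w hw => by simpa using hfgr j w hw) i (ψ v)
    have : f (ψ v) = φ v := LinearMap.congr_fun hψlift v
    rw [show i = i + 0 by ring] at hc ⊢
    rw [← hc, this, gradProj_of_mem 𝒧 hLint (by simpa using hφgr i v hv)]
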